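/- Let 𝔸 be a complete normed real algebra (a Banach algebra), let a, b ∈ 𝔸, and let α ∈ ℝ with α ≠ 0 satisfy the commutation relation a * b - b * a = α • a. Then for every τ ∈ ℝ, the special Baker–Campbell–Hausdorff formula holds: exp(τ • (a + b)) = exp(τ • b) * exp(((Real.exp (τ * α) - 1) / α) • a). -/

import Mathlib

open NormedSpace

lemma aux_pow {𝔸 : Type*} [Ring 𝔸] (a x y : 𝔸) (hxy : a * x = y * a) :
    ∀ n : ℕ, a * x ^ n = y ^ n * a := by
  intro n
  induction n with
  | zero => simp
  | succ n ih =>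
    rw [pow_succ, ← mul_assoc, ih, mul_assoc, hxy, ← mul_assoc, ← pow_succ]

lemma aux_exp {𝔸 : Type*} [NormedRing 𝔸] [NormedAlgebra ℝ 𝔸] [CompleteSpace 𝔸]
    (a x y : 𝔸) (hxy : a * x = y * a) :
    a * exp x = exp y * a := by
  simp only [exp_eq_tsum ℝ]
  rw [← (expSeries_summable' (𝕂 := ℝ) x).tsum_mul_left a,
    ← (expSeries_summable' (𝕂 := ℝ) y).tsum_mul_right a]
  congr 1
  ext n
  rw [mul_smul_comm, smul_mul_assoc, aux_pow a x y hxy n]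

lemma aux_smul_one_exp {𝔸 : Type*} [NormedRing 𝔸] [NormedAlgebra ℝ 𝔸] [CompleteSpace 𝔸]
    (r : ℝ) : exp (r • (1 : 𝔸)) = Real.exp r • (1 : 𝔸) := by
  rw [← Algebra.algebraMap_eq_smul_one, Real.exp_eq_exp_ℝ, ← Algebra.algebraMap_eq_smul_one,
    algebraMap_exp_comm]

lemma aux_key {𝔸 : Type*} [NormedRing 𝔸] [NormedAlgebra ℝ 𝔸] [CompleteSpace 𝔸]
    (a b : 𝔸) (α : ℝ) (h : a * b - b * a = α • a) (t : ℝ) :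
    a * exp (t • b) = Real.exp (t * α) • (exp (t • b) * a) := by
  have hab : a * b = b * a + α • a := by rw [← h]; abel
  have h1 : a * (t • b) = (t • b + (t * α) • (1 : 𝔸)) * a := by
    rw [mul_smul_comm, hab, add_mul, smul_mul_assoc, smul_mul_assoc, one_mul,
      smul_add, mul_smul, smul_comm t α a]
  have h2 := aux_exp a (t • b) (t • b + (t * α) • (1 : 𝔸)) h1
  letI : NormedAlgebra ℚ 𝔸 := NormedAlgebra.restrictScalars ℚ ℝ 𝔸
  have hcomm : Commute ((t * α) • (1 : 𝔸)) (t • b) :=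
    ((Commute.one_left b).smul_left (t * α)).smul_right t
  rw [add_comm, exp_add_of_commute hcomm, aux_smul_one_exp, smul_mul_assoc, one_mul] at h2
  rw [h2, smul_mul_assoc]

theorem bch_special {𝔸 : Type*} [NormedRing 𝔸] [NormedAlgebra ℝ 𝔸] [CompleteSpace 𝔸]
    (a b : 𝔸) (α : ℝ) (hα : α ≠ 0) (h : a * b - b * a = α • a) (τ : ℝ) :
    NormedSpace.exp (τ • (a + b)) =
      NormedSpace.exp (τ • b) *
        NormedSpace.exp (((Real.exp (τ * α) - 1) / α) • a) := by
  set g : ℝ → ℝ := fun t => (Real.exp (t * α) - 1) / α with hg_def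
  set F : ℝ → 𝔸 := fun t => exp (t • b) * exp (g t • a) with hF_def
  set c : 𝔸 := a + b with hc_def
  have hg : ∀ t, HasDerivAt g (Real.exp (t * α)) t := by
    intro t
    have h1 : HasDerivAt (fun s : ℝ => s * α) α t := hasDerivAt_mul_const α
    have h2 : HasDerivAt (fun s : ℝ => Real.exp (s * α)) (Real.exp (t * α) * α) t :=
      by have := (Real.hasDerivAt_exp (t * α)).comp t h1; exact this
    have h3 := (h2.sub_const 1).div_const α
    simpa [mul_div_assoc, div_self hα] using h3
  have hF : ∀ t, HasDerivAt F (c * F t) t := by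
    intro t
    have hb : HasDerivAt (fun s : ℝ => exp (s • b)) (b * exp (t • b)) t :=
      hasDerivAt_exp_smul_const' b t
    have ha : HasDerivAt (fun s : ℝ => exp (g s • a))
        (Real.exp (t * α) • (a * exp (g t • a))) t :=
      HasDerivAt.scomp t (hasDerivAt_exp_smul_const' a (g t)) (hg t)
    have hmul := hb.mul ha
    have key := aux_key a b α h t
    have heq : b * exp (t • b) * exp (g t • a) +
        exp (t • b) * (Real.exp (t * α) • (a * exp (g t • a))) = c * F t := by
      rw [mul_smul_comm, ← mul_assoc, ← smul_mul_assoc, ← key,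
        hc_def, add_mul, mul_assoc, mul_assoc]
      simp only [hF_def]
      abel
    exact heq ▸ hmul
  have hG : ∀ t, HasDerivAt (fun s => exp ((-s) • c) * F s) 0 t := by
    intro t
    have hc : HasDerivAt (fun s : ℝ => exp ((-s) • c))
        ((-1 : ℝ) • (c * exp ((-t) • c))) t :=
      HasDerivAt.scomp t (hasDerivAt_exp_smul_const' c (-t)) (hasDerivAt_neg t)
    have hmul := hc.mul (hF t)
    have hcm : Commute (exp ((-t) • c)) c :=
      ((Commute.refl c).smul_left (-t)).exp_left
    have heq : ((-1 : ℝ) • (c * exp ((-t) • c))) * F t +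
        exp ((-t) • c) * (c * F t) = 0 := by
      rw [← mul_assoc (exp ((-t) • c)) c (F t), hcm.eq, neg_one_smul, neg_mul, neg_add_cancel]
    exact heq ▸ hmul
  have hconst : ∀ t, exp ((-t) • c) * F t = exp ((-(0:ℝ)) • c) * F 0 := by
    intro t
    apply is_const_of_deriv_eq_zero (fun s => (hG s).differentiableAt)
    intro s
    exact (hG s).deriv
  have hG0 : exp ((-(0:ℝ)) • c) * F 0 = 1 := by
    simp [hF_def, hg_def, exp_zero]
  have hτ : exp ((-τ) • c) * F τ = 1 := (hconst τ).trans hG0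
  have hinv : exp (τ • c) * exp ((-τ) • c) = 1 := by
    letI : NormedAlgebra ℚ 𝔸 := NormedAlgebra.restrictScalars ℚ ℝ 𝔸
    rw [← exp_add_of_commute (((Commute.refl c).smul_left τ).smul_right (-τ))]
    simp [exp_zero]
  calc exp (τ • c) = exp (τ • c) * 1 := (mul_one _).symm
    _ = exp (τ • c) * (exp ((-τ) • c) * F τ) := by rw [hτ]
    _ = (exp (τ • c) * exp ((-τ) • c)) * F τ := by rw [mul_assoc]
    _ = F τ := by rw [hinv, one_mul]
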